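/- Let m, k : ℕ, let f : (Fin m → Bool) → (Fin m → Bool) be monotone, and let w : Fin m → Bool satisfy f^k(w) = w with the iterates w, f(w), …, f^{k-1}(w) pairwise distinct. Then k ≤ Nat.choose m (m / 2), i.e., the length of any simple cycle of a monotone self-map of the boolean cube {0,1}^m is at most the binomial coefficient C(m, ⌊m/2⌋). -/

import Mathlib

open Finset

/-- Auxiliary: on a cycle of a monotone map, comparable points are equal. -/
lemma cycle_le_eq (m k : ℕ) (f : (Fin m → Bool) → (Fin m → Bool)) (hf : Monotone f)
    (w : Fin m → Bool) (hcyc : f^[k] w = w) (hk : 0 < k)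
    {i j : ℕ} (hij : i < j) (hle : f^[i] w ≤ f^[j] w) : f^[i] w = f^[j] w := by
  set x := f^[i] w with hx
  have hfix : f^[k] x = x := by
    rw [hx, ← Function.iterate_add_apply, Nat.add_comm, Function.iterate_add_apply, hcyc]
  set d := j - i with hd
  have hxd : f^[d] x = f^[j] w := by
    rw [hx, ← Function.iterate_add_apply, hd, Nat.sub_add_cancel hij.le]
  have h1 : x ≤ f^[d] x := hxd ▸ hle
  set g := f^[d] with hg
  have hg_mono : Monotone g := hf.iterate d
  have hmono : Monotone fun n => g^[n] x := by
    apply monotone_nat_of_le_succ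
    intro n
    simpa [Function.iterate_succ_apply] using (hg_mono.iterate n) h1
  have hgk : g^[k] x = x := by
    rw [hg, ← Function.iterate_mul, mul_comm, Function.iterate_mul]
    exact Function.iterate_fixed hfix d
  have h2 : g x ≤ x := by
    have := hmono (Nat.one_le_iff_ne_zero.mpr hk.ne')
    simpa [hgk] using this
  rw [← hxd]
  exact le_antisymm h1 h2

/-- Sperner bound: the length of any simple cycle of a monotone self-map of the
boolean cube `{0,1}^m` is at most `C(m, ⌊m/2⌋)`. -/
theorem cycle_length_le_central_binom (m k : ℕ)
    (f : (Fin m → Bool) → (Fin m → Bool)) (hf : Monotone f)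
    (w : Fin m → Bool) (hcyc : f^[k] w = w)
    (hdist : ∀ i j : ℕ, i < j → j < k → f^[i] w ≠ f^[j] w) :
    k ≤ Nat.choose m (m / 2) := by
  classical
  rcases Nat.eq_zero_or_pos k with hk0 | hk
  · simp [hk0, Nat.choose_pos (Nat.div_le_self m 2)]
  -- encode cube points as finsets
  let T : (Fin m → Bool) → Finset (Fin m) := fun u => Finset.univ.filter (fun i => u i = true)
  have hT_le : ∀ u v, T u ⊆ T v ↔ u ≤ v := by
    intro u v
    constructor
    · intro h i
      by_cases hu : u i = true
      · have : i ∈ T u := by simp [T, hu]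
        have := h this
        simp [T] at this
        simp [hu, this]
      · simp [Bool.not_eq_true] at hu
        simp [hu]
    · intro h i hi
      simp [T] at hi ⊢
      exact le_antisymm (Bool.le_true _) (hi ▸ h i)
  have hT_inj : Function.Injective T := by
    intro u v huv
    funext i
    have h1 := (hT_le u v).mp (huv ▸ Finset.Subset.refl _)
    have h2 := (hT_le v u).mp (huv ▸ Finset.Subset.refl _)
    exact le_antisymm (h1 i) (h2 i)
  let 𝒜 : Finset (Finset (Fin m)) := (Finset.range k).image (fun n => T (f^[n] w))
  have hcard : 𝒜.card = k := by
    rw [Finset.card_image_of_injOn, Finset.card_range]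
    intro a ha b hb hab
    simp [Finset.mem_range] at ha hb
    by_contra hne
    rcases Nat.lt_or_ge a b with h | h
    · exact hdist a b h hb (hT_inj hab)
    · exact hdist b a (lt_of_le_of_ne h (Ne.symm hne)) ha (hT_inj hab.symm)
  have hanti : IsAntichain (· ⊆ ·) (𝒜 : Set (Finset (Fin m))) := by
    intro s hs t ht hst hsub
    simp [𝒜, Finset.mem_coe, Finset.mem_image, Finset.mem_range] at hs ht
    obtain ⟨a, ha, rfl⟩ := hs
    obtain ⟨b, hb, rfl⟩ := ht
    have hle : f^[a] w ≤ f^[b] w := (hT_le _ _).mp hsub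
    rcases Nat.lt_trichotomy a b with h | h | h
    · exact hst (congrArg T (cycle_le_eq m k f hf w hcyc hk h hle))
    · exact hst (by rw [h])
    · -- b < a: use cycle_le_eq with roles swapped via the reverse comparison
      have := cycle_le_eq m k f hf w hcyc hk h
      -- need f^[b] w ≤ f^[a] w? We only have hle : f^[a] w ≤ f^[b] w
      -- use antisymmetry through the cycle lemma applied to (b, a) with hle reversed:
      -- get equality from hle by shifting: f^[a] w ≤ f^[b] w with a > b.
      -- Shift indices: f^[a] w = f^[a - b] (f^[b] w) and iterate argument symmetric.
      -- Simplest: apply cycle_le_eq to indices b and a + (k - ?) ... use modular trick: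
      -- f^[a] w ≤ f^[b] w = f^[b + k] w? since f^[k] w = w, f^[b + k] w = f^[b] w.
      have hbk : f^[b + k] w = f^[b] w := by
        rw [Function.iterate_add_apply, hcyc]
      have : f^[a] w = f^[b + k] w := by
        apply cycle_le_eq m k f hf w hcyc hk
        · omega
        · rw [hbk]; exact hle
      exact hst (congrArg T (this.trans hbk))
  have := IsAntichain.sperner hanti
  simpa [hcard, Fintype.card_fin] using this
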